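/- Let π be a smooth representation of B over 𝔽̄_p, and suppose v ∈ π is fixed by α (acting through a character: α·v = c·v with c ≠ 0) and v is fixed by some N'_{m+2k} for k ≥ 0. If additionally α N'_{m+2k-2} α⁻¹ = N'_{m+2k} and v = c⁻¹ α·v, then v is fixed by N'_{m+2k-2}; iterating, v is fixed by the full group N' = ⋃_j N'_{m-2j}. Consequently, if ε is a smooth character of B with Hom_B(ε, π) ≠ 0 for π a smooth G-representation, then ε extends to a character of G = ⟨B, N'⟩ and Hom_B(ε,π) ≅ Hom_G(ε,π); in particular if ε is not of the form η ∘ det then Hom_B(ε, π) = 0. -/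
import Mathlib


/-- in the setting of G = U(2,1)(E/F) with Borel B, lower unipotent
subgroup N' filtered by subgroups N'_k with α·N'_k·α⁻¹ = N'_{k+2}:
(a) if v is an eigenvector of α with nonzero eigenvalue and v is fixed by some N'_j,
then v is fixed by all of N';
(b) consequently, if ε is a smooth character of B occurring in a smooth representation π
of G, then ε extends to a character of G = ⟨B, N'⟩ and any vector on which B acts by ε
is acted on by G through the extended character (whence Hom_B(ε,π) ≅ Hom_G(ε,π));
(c) in particular, if ε does not extend to a character of G (i.e. ε is not of the form
η ∘ det), then Hom_B(ε, π) = 0. -/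
theorem extension_of_character
    (K : Type*) [Field K]
    (G : Type*) [Group G] (B N' : Subgroup G)
    (Nf : ℤ → Subgroup G)
    (hantitone : ∀ k l : ℤ, k ≤ l → Nf l ≤ Nf k)
    (hN' : ∀ g : G, g ∈ N' ↔ ∃ k : ℤ, g ∈ Nf k)
    (α : G) (hαB : α ∈ B)
    (hconj : ∀ (k : ℤ) (g : G), g ∈ Nf k ↔ α * g * α⁻¹ ∈ Nf (k + 2))
    (hgen : Subgroup.closure ((B : Set G) ∪ (N' : Set G)) = ⊤)
    (V : Type*) [AddCommGroup V] [Module K V]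
    (ρ : Representation K G V)
    -- smoothness: every vector is fixed by some filtration subgroup N'_j
    (hsmooth : ∀ w : V, ∃ j : ℤ, ∀ g ∈ Nf j, ρ g w = w)
    (ε : B →* Kˣ) :
    -- (a)
    (∀ (v : V) (c : Kˣ), ρ α v = (c : K) • v → (∃ j : ℤ, ∀ g ∈ Nf j, ρ g v = v) →
      ∀ g ∈ N', ρ g v = v) ∧
    -- (b)
    (∀ v : V, v ≠ 0 → (∀ b : B, ρ (b : G) v = ((ε b : Kˣ) : K) • v) →
      ∃ εG : G →* Kˣ, (∀ b : B, εG (b : G) = ε b) ∧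
        ∀ g : G, ρ g v = ((εG g : Kˣ) : K) • v) ∧
    -- (c)
    ((¬ ∃ εG : G →* Kˣ, ∀ b : B, εG (b : G) = ε b) →
      ∀ v : V, (∀ b : B, ρ (b : G) v = ((ε b : Kˣ) : K) • v) → v = 0) := by
  classical
  have parta : ∀ (v : V) (c : Kˣ), ρ α v = (c : K) • v → (∃ j : ℤ, ∀ g ∈ Nf j, ρ g v = v) →
      ∀ g ∈ N', ρ g v = v := by
    rintro v c hv ⟨j, hj⟩ g hg
    obtain ⟨k, hk⟩ := (hN' g).1 hg
    set n : ℕ := (j - k).toNat with hn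
    have hjn : j ≤ k + 2 * (n : ℤ) := by
      have := Int.self_le_toNat (j - k)
      omega
    have hmem : ∀ m : ℕ, α ^ m * g * (α ^ m)⁻¹ ∈ Nf (k + 2 * m) := by
      intro m
      induction m with
      | zero => simpa using hk
      | succ m ih =>
        have h2 := (hconj (k + 2 * m) _).1 ih
        have heq : α * (α ^ m * g * (α ^ m)⁻¹) * α⁻¹ = α ^ (m + 1) * g * (α ^ (m + 1))⁻¹ := by
          group
        rw [heq] at h2
        have : (k + 2 * (m : ℤ) + 2) = k + 2 * ((m : ℕ) + 1 : ℕ) := by push_cast; ring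
        rwa [this] at h2
    have hfix : ρ (α ^ n * g * (α ^ n)⁻¹) v = v :=
      hj _ (hantitone j (k + 2 * n) hjn (hmem n))
    have hpow : ∀ m : ℕ, ρ (α ^ m) v = ((c : K) ^ m) • v := by
      intro m
      induction m with
      | zero => simp
      | succ m ih =>
        rw [pow_succ, map_mul, Module.End.mul_apply, hv, map_smul, ih, smul_smul, pow_succ]
        ring_nf
    have hcn : ((c : K) ^ n) ≠ 0 := pow_ne_zero _ c.ne_zero
    have hpowinv : ρ ((α ^ n)⁻¹) v = ((c : K) ^ n)⁻¹ • v := by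
      have h1 : ρ ((α ^ n)⁻¹) (ρ (α ^ n) v) = v := by
        rw [← Module.End.mul_apply, ← map_mul, inv_mul_cancel, map_one, Module.End.one_apply]
      rw [hpow, map_smul] at h1
      rw [eq_inv_smul_iff₀ hcn]
      exact h1
    have hgdec : g = (α ^ n)⁻¹ * (α ^ n * g * (α ^ n)⁻¹) * α ^ n := by group
    rw [hgdec, map_mul, map_mul, Module.End.mul_apply, Module.End.mul_apply, hpow,
      map_smul, hfix, map_smul, hpowinv, smul_smul, mul_inv_cancel₀ hcn, one_smul]
  have partb : ∀ v : V, v ≠ 0 → (∀ b : B, ρ (b : G) v = ((ε b : Kˣ) : K) • v) →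
      ∃ εG : G →* Kˣ, (∀ b : B, εG (b : G) = ε b) ∧
        ∀ g : G, ρ g v = ((εG g : Kˣ) : K) • v := by
    intro v hv hB
    have hα : ρ α v = ((ε ⟨α, hαB⟩ : Kˣ) : K) • v := hB ⟨α, hαB⟩
    have hNfix : ∀ g ∈ N', ρ g v = v := parta v _ hα (hsmooth v)
    let S : Subgroup G :=
      { carrier := {g | ∃ c : Kˣ, ρ g v = (c : K) • v}
        one_mem' := ⟨1, by simp⟩
        mul_mem' := by
          rintro a b ⟨ca, ha⟩ ⟨cb, hb⟩
          refine ⟨ca * cb, ?_⟩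
          rw [map_mul, Module.End.mul_apply, hb, map_smul, ha, smul_smul]
          push_cast
          ring_nf
        inv_mem' := by
          rintro a ⟨ca, ha⟩
          refine ⟨ca⁻¹, ?_⟩
          have h1 : ρ a⁻¹ (ρ a v) = v := by
            rw [← Module.End.mul_apply, ← map_mul, inv_mul_cancel, map_one, Module.End.one_apply]
          rw [ha, map_smul] at h1
          push_cast
          rw [eq_inv_smul_iff₀ ca.ne_zero]
          exact h1 }
    have hStop : ∀ g : G, g ∈ S := by
      have hle : Subgroup.closure ((B : Set G) ∪ (N' : Set G)) ≤ S := by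
        rw [Subgroup.closure_le]
        rintro g (hg | hg)
        · exact ⟨ε ⟨g, hg⟩, hB ⟨g, hg⟩⟩
        · exact ⟨1, by simpa using hNfix g hg⟩
      intro g
      exact hle (hgen ▸ Subgroup.mem_top g : g ∈ Subgroup.closure ((B : Set G) ∪ (N' : Set G)))
    choose f hf using hStop
    have hcancel : ∀ x y : Kˣ, (x : K) • v = (y : K) • v → x = y := by
      intro x y h
      exact Units.ext (smul_left_injective K hv h)
    have hmul : ∀ a b : G, f (a * b) = f a * f b := by
      intro a b
      apply hcancel
      rw [← hf (a * b), map_mul, Module.End.mul_apply, hf b, map_smul, hf a, smul_smul]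
      push_cast
      ring_nf
    refine ⟨MonoidHom.mk' f hmul, ?_, ?_⟩
    · intro b
      exact hcancel _ _ ((hf (b : G)).symm.trans (hB b))
    · intro g
      exact hf g
  refine ⟨parta, partb, ?_⟩
  intro hne v hv
  by_contra hv0
  obtain ⟨εG, hεG, -⟩ := partb v hv0 hv
  exact hne ⟨εG, hεG⟩
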